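/- Let G be a finite group and let p, q be distinct primes. Then G contains a subgroup which is a Schmidt (p,q)-group if and only if there exists a p-subgroup P of G such that q divides the order of N_G(P)/C_G(P). -/

import Mathlib

/-- The join of a set of normal subgroups is normal. -/
theorem sSup_normal {G : Type*} [Group G] (S : Set (Subgroup G)) (hS : ∀ N ∈ S, N.Normal) :
    (sSup S).Normal := by
  constructor
  intro n hn g
  rw [sSup_eq_iSup'] at hn ⊢
  refine Subgroup.iSup_induction (C := fun x => g * x * g⁻¹ ∈ ⨆ N : S, (N : Subgroup G))
    _ hn ?_ ?_ ?_
  · intro N x hx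
    exact Subgroup.mem_iSup_of_mem N ((hS N N.2).conj_mem x hx g)
  · simpa using Subgroup.one_mem _
  · intro x y hx hy
    have h : g * (x * y) * g⁻¹ = (g * x * g⁻¹) * (g * y * g⁻¹) := by group
    rw [h]; exact Subgroup.mul_mem _ hx hy

/-- The `p'`-core `O_{p'}(G)`: the largest normal subgroup of `G` of order coprime to `p`,
realized as the join of all normal subgroups of order coprime to `p`. -/
def pPrimeCore (p : ℕ) (G : Type*) [Group G] : Subgroup G :=
  sSup {N : Subgroup G | N.Normal ∧ Nat.Coprime (Nat.card N) p}

instance pPrimeCore_normal (p : ℕ) (G : Type*) [Group G] : (pPrimeCore p G).Normal :=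
  sSup_normal _ fun _ hN => hN.1

/-- The `p`-core `O_p(G)`: the largest normal `p`-subgroup of `G`,
realized as the join of all normal `p`-subgroups. -/
def pCore (p : ℕ) (G : Type*) [Group G] : Subgroup G :=
  sSup {N : Subgroup G | N.Normal ∧ IsPGroup p N}

instance pCore_normal (p : ℕ) (G : Type*) [Group G] : (pCore p G).Normal :=
  sSup_normal _ fun _ hN => hN.1

/-- `O_{p',p}(G)`: the preimage in `G` of `O_p(G / O_{p'}(G))`. -/
def OpPrimeP (p : ℕ) (G : Type*) [Group G] : Subgroup G :=
  (pCore p (G ⧸ pPrimeCore p G)).comap (QuotientGroup.mk' (pPrimeCore p G))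

/-- A Schmidt group: a non-nilpotent group all of whose proper subgroups are nilpotent. -/
def IsSchmidt (G : Type*) [Group G] : Prop :=
  ¬ Group.IsNilpotent G ∧ ∀ H : Subgroup G, H ≠ ⊤ → Group.IsNilpotent H

/-- A Schmidt `(p,q)`-group: a Schmidt group whose order is divisible by exactly the
primes `p` and `q` and whose Sylow `p`-subgroup is normal. -/
def IsSchmidtPQ (p q : ℕ) (G : Type*) [Group G] : Prop :=
  IsSchmidt G ∧ (Nat.card G).primeFactors = {p, q} ∧ ∃ P : Sylow p G, (P : Subgroup G).Normal

section SchmidtAux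

open Subgroup

lemma aux_pq_eq_one {p q : ℕ} (hp : p.Prime) (hq : q.Prime) (hpq : p ≠ q)
    {M : Type*} [Group M] {x : M} (h1 : ∃ n, x ^ p ^ n = 1) (h2 : ∃ k, x ^ q ^ k = 1) :
    x = 1 := by
  obtain ⟨n, h1⟩ := h1; obtain ⟨k, h2⟩ := h2
  have d1 := orderOf_dvd_of_pow_eq_one h1
  have d2 := orderOf_dvd_of_pow_eq_one h2
  have hc : Nat.Coprime (p ^ n) (q ^ k) := Nat.coprime_pow_primes n k hp hq hpq
  have hd : orderOf x ∣ Nat.gcd (p ^ n) (q ^ k) := Nat.dvd_gcd d1 d2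
  rw [hc.gcd_eq_one, Nat.dvd_one] at hd
  exact orderOf_eq_one_iff.mp hd

lemma aux_zpow_pow {M : Type*} [Group M] {g x : M} (hx : ∃ m : ℤ, g ^ m = x) {n : ℕ}
    (hg : g ^ n = 1) : x ^ n = 1 := by
  obtain ⟨m, rfl⟩ := hx
  rw [← zpow_natCast, ← zpow_mul, mul_comm, zpow_mul, zpow_natCast, hg, one_zpow]

lemma aux_subgroupOf_normal_of_le_normalizer {G : Type*} [Group G] {P S : Subgroup G}
    (h : S ≤ (Subgroup.normalizer (P : Set G))) : (P.subgroupOf S).Normal := by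
  constructor
  intro x hx g
  rw [Subgroup.mem_subgroupOf] at hx ⊢
  have := (Subgroup.mem_normalizer_iff.mp (h g.2) ↑x).mp hx
  simpa using this

lemma aux_centralizer_subgroupOf_normal {G : Type*} [Group G] (P : Subgroup G) :
    ((Subgroup.centralizer (P : Set G)).subgroupOf (Subgroup.normalizer (P : Set G))).Normal := by
  constructor
  intro c hc n
  rw [Subgroup.mem_subgroupOf] at hc ⊢
  rw [Subgroup.mem_centralizer_iff] at hc ⊢
  intro x hx
  have hy : (↑n)⁻¹ * x * ↑n ∈ P := by
    have := (Subgroup.mem_normalizer_iff.mp ((Subgroup.normalizer (P : Set G)).inv_mem n.2) x).mp hx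
    simpa using this
  have hcy := hc _ hy
  push_cast
  have h1 : (x : G) * (↑n * ↑c * (↑n)⁻¹) = ↑n * (((↑n)⁻¹ * x * ↑n) * ↑c) * (↑n)⁻¹ := by group
  rw [h1, hcy]
  group

/-- Reverse direction. -/
lemma aux_reverse {G : Type*} [Group G] [Finite G] {p q : ℕ}
    (hp : p.Prime) (hq : q.Prime) (hpq : p ≠ q) (P : Subgroup G) (hP : IsPGroup p P)
    (hdvd : q ∣ (Subgroup.centralizer (P : Set G)).relIndex (Subgroup.normalizer (P : Set G))) :
    ∃ H : Subgroup G, IsSchmidtPQ p q H := by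
  haveI := Fact.mk hp
  haveI := Fact.mk hq
  set N := (Subgroup.normalizer (P : Set G)) with hN
  set Cn := (Subgroup.centralizer (P : Set G)).subgroupOf N with hCn
  haveI : Cn.Normal := aux_centralizer_subgroupOf_normal P
  have hdvd' : q ∣ Nat.card (↥N ⧸ Cn) := by
    rwa [Subgroup.relIndex, Subgroup.index_eq_card] at hdvd
  obtain ⟨η, hη⟩ := exists_prime_orderOf_dvd_card' q hdvd'
  obtain ⟨nb, rfl⟩ := QuotientGroup.mk_surjective η
  -- extract a q-element
  set k := (orderOf nb).factorization q with hk
  set s := ordCompl[q] (orderOf nb) with hs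
  have hordpos : 0 < orderOf nb := orderOf_pos nb
  set g : ↥N := nb ^ s with hg
  have hgq : g ^ q ^ k = 1 := by
    rw [hg, ← pow_mul, mul_comm, Nat.ordProj_mul_ordCompl_eq_self]
    exact pow_orderOf_eq_one nb
  have hmkg : orderOf ((g : ↥N) : ↥N ⧸ Cn) = q := by
    have : ((g : ↥N) : ↥N ⧸ Cn) = (↑nb : ↥N ⧸ Cn) ^ s := by
      rw [hg]; push_cast; rfl
    rw [this, orderOf_pow, hη, Nat.Coprime.gcd_eq_one, Nat.div_one]
    exact (Nat.Prime.coprime_iff_not_dvd hq).mpr (Nat.not_dvd_ordCompl hq hordpos.ne')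
  have hgC : ((g : ↥N) : G) ∉ Subgroup.centralizer (P : Set G) := by
    intro hmem
    have : ((g : ↥N) : ↥N ⧸ Cn) = 1 := (QuotientGroup.eq_one_iff g).mpr
      (Subgroup.mem_subgroupOf.mpr hmem)
    rw [this, orderOf_one] at hmkg
    exact hq.ne_one hmkg.symm
  set g₀ : G := ((g : ↥N) : G) with hg₀
  have hg₀N : g₀ ∈ (Subgroup.normalizer (P : Set G)) := g.2
  have hg₀q : g₀ ^ q ^ k = 1 := by
    have := congrArg (fun x : ↥N => (x : G)) hgq
    simpa using this
  set K := P ⊔ Subgroup.zpowers g₀ with hK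
  have hKN : K ≤ (Subgroup.normalizer (P : Set G)) := sup_le Subgroup.le_normalizer (Subgroup.zpowers_le.mpr hg₀N)
  have hPK : P ≤ K := le_sup_left
  have hgK : g₀ ∈ K := Subgroup.mem_sup_right (Subgroup.mem_zpowers g₀)
  set PK := P.subgroupOf K with hPKdef
  haveI hPKnormal : PK.Normal := aux_subgroupOf_normal_of_le_normalizer hKN
  have hPKp : IsPGroup p PK := hP.comap_of_injective K.subtype K.subtype_injective
  set π := QuotientGroup.mk' PK with hπ
  set gK : ↥K := ⟨g₀, hgK⟩ with hgKdef
  have hπg : (π gK) ^ q ^ k = 1 := by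
    rw [← map_pow]
    have : gK ^ q ^ k = 1 := by ext; simpa using hg₀q
    rw [this, map_one]
  -- every element of the quotient is a power of π gK
  have hZ : ∀ x : ↥K, π x ∈ Subgroup.zpowers (π gK) := by
    set Z := (Subgroup.zpowers (π gK)).comap π with hZdef
    have hmapZ : K ≤ Subgroup.map K.subtype Z := by
      show P ⊔ Subgroup.zpowers g₀ ≤ Subgroup.map K.subtype Z
      apply sup_le
      · intro x hx
        have hker : (⟨x, hPK hx⟩ : ↥K) ∈ PK := Subgroup.mem_subgroupOf.mpr hx
        have hker1 : π ⟨x, hPK hx⟩ = 1 := (QuotientGroup.eq_one_iff _).mpr hker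
        have hx' : (⟨x, hPK hx⟩ : ↥K) ∈ Z := by
          rw [hZdef, Subgroup.mem_comap, hker1]
          exact Subgroup.one_mem _
        exact ⟨_, hx', rfl⟩
      · rw [Subgroup.zpowers_le]
        exact ⟨gK, Subgroup.mem_zpowers _, rfl⟩
    intro x
    obtain ⟨y, hy, hyx⟩ := hmapZ x.2
    have : y = x := Subtype.ext hyx
    rw [← this]
    exact hy
  have hQt : IsPGroup q (↥K ⧸ PK) := by
    intro x
    obtain ⟨y, rfl⟩ := QuotientGroup.mk_surjective x
    refine ⟨k, ?_⟩
    show (π y) ^ q ^ k = 1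
    exact aux_zpow_pow (Subgroup.mem_zpowers_iff.mp (hZ y)) hπg
  -- K is not nilpotent
  have hKnn : ¬ Group.IsNilpotent ↥K := by
    intro hnil
    have hgKq : gK ^ q ^ k = 1 := by ext; simpa using hg₀q
    have hgq' : IsPGroup q (Subgroup.zpowers gK) := by
      intro x
      refine ⟨k, Subtype.ext ?_⟩
      rw [SubmonoidClass.coe_pow, OneMemClass.coe_one]
      exact aux_zpow_pow (Subgroup.mem_zpowers_iff.mp x.2) hgKq
    obtain ⟨Q, hQle⟩ := hgq'.exists_le_sylow
    have hallnormal : ∀ (r : ℕ) (_ : Fact r.Prime) (Qr : Sylow r ↥K), (↑Qr : Subgroup ↥K).Normal :=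
      ((isNilpotent_of_finite_tfae (G := ↥K)).out 0 3).mp hnil
    have hQnormal : (Q : Subgroup ↥K).Normal := hallnormal q (Fact.mk hq) Q
    have hdisj : Disjoint PK (Q : Subgroup ↥K) :=
      IsPGroup.disjoint_of_ne p q hpq _ _ hPKp Q.isPGroup'
    apply hgC
    rw [Subgroup.mem_centralizer_iff]
    intro x hx
    have hcomm := Subgroup.commute_of_normal_of_disjoint _ _ hPKnormal hQnormal hdisj
      ⟨x, hPK hx⟩ gK (Subgroup.mem_subgroupOf.mpr hx) (hQle (Subgroup.mem_zpowers gK))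
    have := congrArg (fun z : ↥K => (z : G)) hcomm.eq
    simpa using this
  -- take a minimal non-nilpotent subgroup of K
  haveI : Finite (Subgroup G) := Finite.of_injective _ SetLike.coe_injective
  obtain ⟨S, hS, hmin⟩ : ∃ S ∈ {S : Subgroup G | S ≤ K ∧ ¬ Group.IsNilpotent ↥S},
      ∀ S' ∈ {S : Subgroup G | S ≤ K ∧ ¬ Group.IsNilpotent ↥S}, id S' ≤ id S → id S = id S' := by
    obtain ⟨S, hS, hm⟩ := Set.Finite.exists_minimalFor id
      {S : Subgroup G | S ≤ K ∧ ¬ Group.IsNilpotent ↥S} (Set.toFinite _) ⟨K, le_refl K, hKnn⟩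
    exact ⟨S, hS, fun S' h1 h2 => le_antisymm (hm h1 h2) h2⟩
  simp only [id] at hmin
  obtain ⟨hSK, hSnn⟩ := hS
  have hcard0 : Nat.card ↥S ≠ 0 := Nat.card_pos.ne'
  -- prime factors of card S
  obtain ⟨a, ha⟩ := hPKp.exists_card_eq
  obtain ⟨b, hb⟩ := hQt.exists_card_eq
  have hsub : ∀ r : ℕ, r.Prime → r ∣ Nat.card ↥S → r = p ∨ r = q := by
    intro r hr hrdvd
    have h1 : r ∣ Nat.card ↥K := hrdvd.trans (Subgroup.card_dvd_of_le hSK)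
    rw [← PK.card_mul_index, Subgroup.index_eq_card, ha, hb] at h1
    rcases hr.dvd_mul.mp h1 with h | h
    · exact Or.inl ((Nat.prime_dvd_prime_iff_eq hr hp).mp (hr.dvd_of_dvd_pow h))
    · exact Or.inr ((Nat.prime_dvd_prime_iff_eq hr hq).mp (hr.dvd_of_dvd_pow h))
  have hpdvd : p ∣ Nat.card ↥S := by
    by_contra hpd
    apply hSnn
    have : Nat.card ↥S = q ^ (Nat.card ↥S).primeFactorsList.length := by
      refine Nat.eq_prime_pow_of_unique_prime_dvd hcard0 ?_
      intro d hd hddvd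
      rcases hsub d hd hddvd with rfl | rfl
      · exact absurd hddvd hpd
      · rfl
    exact (IsPGroup.of_card this).isNilpotent
  have hqdvd : q ∣ Nat.card ↥S := by
    by_contra hqd
    apply hSnn
    have : Nat.card ↥S = p ^ (Nat.card ↥S).primeFactorsList.length := by
      refine Nat.eq_prime_pow_of_unique_prime_dvd hcard0 ?_
      intro d hd hddvd
      rcases hsub d hd hddvd with rfl | rfl
      · rfl
      · exact absurd hddvd hqd
    exact (IsPGroup.of_card this).isNilpotent
  refine ⟨S, ⟨hSnn, ?_⟩, ?_, ?_⟩
  · -- proper subgroups nilpotent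
    intro T hT
    set T' := T.map S.subtype with hT'
    have hT'S : T' ≤ S := Subgroup.map_subtype_le T
    have hT'ne : T' ≠ S := by
      intro heq
      apply hT
      have h2 : T.map S.subtype = (⊤ : Subgroup ↥S).map S.subtype := by
        rw [← MonoidHom.range_eq_map, Subgroup.range_subtype]
        exact heq
      exact Subgroup.map_injective S.subtype_injective h2
    have hT'nil : Group.IsNilpotent ↥T' := by
      by_contra h'
      exact hT'ne (hmin T' ⟨hT'S.trans hSK, h'⟩ hT'S).symm
    exact nilpotent_of_mulEquiv (Subgroup.equivMapOfInjective T S.subtype S.subtype_injective).symm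
  · -- prime factors
    ext r
    simp only [Finset.mem_insert, Finset.mem_singleton]
    constructor
    · intro hr
      rw [Nat.mem_primeFactors] at hr
      exact hsub r hr.1 hr.2.1
    · rintro (rfl | rfl)
      · exact Nat.mem_primeFactors.mpr ⟨hp, hpdvd, hcard0⟩
      · exact Nat.mem_primeFactors.mpr ⟨hq, hqdvd, hcard0⟩
  · -- normal Sylow p
    set PS := P.subgroupOf S with hPS
    have hPSp : IsPGroup p PS := hP.comap_of_injective S.subtype S.subtype_injective
    have hmax : ∀ {Q : Subgroup ↥S}, IsPGroup p Q → PS ≤ Q → Q = PS := by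
      intro Q hQ hle
      refine le_antisymm ?_ hle
      intro x hx
      rw [hPS, Subgroup.mem_subgroupOf]
      set φ := π.comp (Subgroup.inclusion hSK) with hφ
      have hφx : φ x = 1 := by
        refine aux_pq_eq_one hp hq hpq ?_ (hQt (φ x))
        obtain ⟨n, hn⟩ := hQ ⟨x, hx⟩
        refine ⟨n, ?_⟩
        rw [← map_pow]
        have : x ^ p ^ n = 1 := by
          have := congrArg (fun z : ↥Q => (z : ↥S)) hn
          simpa using this
        rw [this, map_one]
      have : Subgroup.inclusion hSK x ∈ PK := by
        rw [← QuotientGroup.ker_mk' PK, MonoidHom.mem_ker]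
        exact hφx
      rw [hPKdef, Subgroup.mem_subgroupOf] at this
      simpa using this
    refine ⟨⟨PS, hPSp, fun {Q} hQ hle => hmax hQ hle⟩,
      aux_subgroupOf_normal_of_le_normalizer (hSK.trans hKN)⟩

/-- Forward direction. -/
lemma aux_forward {G : Type*} [Group G] [Finite G] {p q : ℕ}
    (hp : p.Prime) (hq : q.Prime) (hpq : p ≠ q) (H : Subgroup G) (hH : IsSchmidtPQ p q ↥H) :
    ∃ P : Subgroup G, IsPGroup p P ∧
      q ∣ (Subgroup.centralizer (P : Set G)).relIndex (Subgroup.normalizer (P : Set G)) := by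
  haveI := Fact.mk hp
  haveI := Fact.mk hq
  obtain ⟨⟨hnn, _⟩, hpf, Psy, hPsyN⟩ := hH
  have hcard0 : Nat.card ↥H ≠ 0 := Nat.card_pos.ne'
  have claim : ∃ h : ↥H, (∃ n, h ^ q ^ n = 1) ∧ ∃ x ∈ (Psy : Subgroup ↥H), ¬ Commute h x := by
    by_contra hcon
    push_neg at hcon
    apply hnn
    have hfinSyl : ∀ r : ℕ, Finite (Sylow r ↥H) := fun r =>
      Finite.of_injective (fun Q : Sylow r ↥H => (Q : Subgroup ↥H)) fun _ _ h => Sylow.ext h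
    refine ((isNilpotent_of_finite_tfae (G := ↥H)).out 3 0).mp ?_
    intro r hr Q
    haveI := hr
    haveI := hfinSyl r
    rcases eq_or_ne r p with rfl | hrp
    · haveI := Sylow.unique_of_normal Psy hPsyN
      rwa [Subsingleton.elim Q Psy]
    rcases eq_or_ne r q with rfl | hrq
    · haveI := hfinSyl p
      have hcomm : ∀ y ∈ (Q : Subgroup ↥H), ∀ x ∈ (Psy : Subgroup ↥H), Commute y x := by
        intro y hy x hx
        refine hcon y ?_ x hx
        obtain ⟨n, hn⟩ := Q.isPGroup' ⟨y, hy⟩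
        refine ⟨n, ?_⟩
        have := congrArg (fun z : ↥(Q : Subgroup ↥H) => (z : ↥H)) hn
        simpa using this
      have hPsyle : (Psy : Subgroup ↥H) ≤ (Subgroup.normalizer ((Q : Subgroup ↥H) : Set ↥H)) := by
        intro x hx
        rw [Subgroup.mem_normalizer_iff]
        intro y
        constructor
        · intro hy
          have h1 := (hcomm y hy x hx).eq
          have h3 : x * y * x⁻¹ = y := by
            calc x * y * x⁻¹ = y * x * x⁻¹ := by rw [← h1]
            _ = y := by group
          rw [h3]; exact hy
        · intro hy
          have h1 := (hcomm _ hy x hx).eq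
          have h3 : x * y = x * (x * y * x⁻¹) := by
            calc x * y = (x * y * x⁻¹) * x := by group
            _ = x * (x * y * x⁻¹) := h1
          have h2 := mul_left_cancel h3
          rw [← h2] at hy
          exact hy
      have hQle : (Q : Subgroup ↥H) ≤ (Subgroup.normalizer ((Q : Subgroup ↥H) : Set ↥H)) := Subgroup.le_normalizer
      rw [← Subgroup.normalizer_eq_top_iff, ← Subgroup.index_eq_one]
      by_contra hne
      obtain ⟨r', hr'p, hr'dvd⟩ := Nat.exists_prime_and_dvd hne
      have d1 : r' ∣ (Psy : Subgroup ↥H).index := hr'dvd.trans (Subgroup.index_dvd_of_le hPsyle)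
      have d2 : r' ∣ (Q : Subgroup ↥H).index := hr'dvd.trans (Subgroup.index_dvd_of_le hQle)
      have hrcard : r' ∣ Nat.card ↥H := d1.trans (Subgroup.index_dvd_card _)
      have hmem := Nat.mem_primeFactors.mpr ⟨hr'p, hrcard, hcard0⟩
      rw [hpf] at hmem
      simp only [Finset.mem_insert, Finset.mem_singleton] at hmem
      rcases hmem with rfl | rfl
      · exact Psy.not_dvd_index d1
      · exact Q.not_dvd_index d2
    · have hQ1 : Nat.card (Q : Subgroup ↥H) = 1 := by
        obtain ⟨n, hn⟩ := Q.isPGroup'.exists_card_eq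
        rcases Nat.eq_zero_or_pos n with rfl | hnpos
        · simpa using hn
        · exfalso
          have hrdvd : r ∣ Nat.card ↥H := by
            refine dvd_trans ?_ (Subgroup.card_subgroup_dvd_card (Q : Subgroup ↥H))
            rw [hn]; exact dvd_pow_self r hnpos.ne'
          have hmem := Nat.mem_primeFactors.mpr ⟨hr.out, hrdvd, hcard0⟩
          rw [hpf] at hmem
          simp only [Finset.mem_insert, Finset.mem_singleton] at hmem
          tauto
      rw [Subgroup.card_eq_one] at hQ1
      rw [hQ1]
      infer_instance
  obtain ⟨h, hhq, x, hxPsy, hnc⟩ := claim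
  set P' := (Psy : Subgroup ↥H).map H.subtype with hP'
  have hP'p : IsPGroup p P' := Psy.isPGroup'.map _
  have hHN : ∀ a : ↥H, (a : G) ∈ (Subgroup.normalizer (P' : Set G)) := by
    intro a
    rw [Subgroup.mem_normalizer_iff]
    intro y
    constructor
    · rintro ⟨u, hu, rfl⟩
      refine ⟨a * u * a⁻¹, hPsyN.conj_mem u hu a, ?_⟩
      simp [Subgroup.coe_subtype]
    · rintro ⟨v, hv, hw⟩
      simp only [Subgroup.coe_subtype] at hw
      have hy : y = H.subtype (a⁻¹ * v * a) := by
        simp only [Subgroup.coe_subtype]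
        push_cast
        rw [hw]
        group
      rw [hy]
      exact ⟨a⁻¹ * v * a, by have := hPsyN.conj_mem v hv a⁻¹; rw [inv_inv] at this; exact this, rfl⟩
  set N := (Subgroup.normalizer (P' : Set G)) with hNdef
  set Cn := (Subgroup.centralizer (P' : Set G)).subgroupOf N with hCndef
  haveI : Cn.Normal := aux_centralizer_subgroupOf_normal P'
  set η : ↥N ⧸ Cn := ((⟨(h : G), hHN h⟩ : ↥N) : ↥N ⧸ Cn) with hη
  have hη1 : η ≠ 1 := by
    intro heq
    have hmem : ((h : G)) ∈ Subgroup.centralizer (P' : Set G) :=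
      Subgroup.mem_subgroupOf.mp
        ((QuotientGroup.eq_one_iff (⟨(h : G), hHN h⟩ : ↥N)).mp heq)
    apply hnc
    have hcent := Subgroup.mem_centralizer_iff.mp hmem (↑x) ⟨x, hxPsy, rfl⟩
    exact Subtype.ext (by push_cast; exact hcent.symm)
  obtain ⟨n, hn⟩ := hhq
  have hηq : η ^ q ^ n = 1 := by
    have h1 : (⟨(h : G), hHN h⟩ : ↥N) ^ q ^ n = 1 := by
      ext
      have := congrArg (fun z : ↥H => (z : G)) hn
      simpa using this
    have h2 : η = QuotientGroup.mk' Cn ⟨(h : G), hHN h⟩ := rfl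
    rw [h2, ← map_pow, h1, map_one]
  have hord : q ∣ orderOf η := by
    have hd : orderOf η ∣ q ^ n := orderOf_dvd_of_pow_eq_one hηq
    obtain ⟨m, hm, hmeq⟩ := (Nat.dvd_prime_pow hq).mp hd
    rcases Nat.eq_zero_or_pos m with rfl | hmpos
    · rw [pow_zero] at hmeq
      exact absurd (orderOf_eq_one_iff.mp hmeq) hη1
    · rw [hmeq]; exact dvd_pow_self q hmpos.ne'
  refine ⟨P', hP'p, ?_⟩
  show q ∣ Cn.index
  rw [Subgroup.index_eq_card]
  exact hord.trans (orderOf_dvd_natCard η)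

end SchmidtAux

/-- `G` contains a Schmidt `(p,q)`-subgroup iff there is a `p`-subgroup `P` of `G` such that
`q` divides the order of `N_G(P)/C_G(P)`. -/
theorem schmidt_subgroup_iff_pSubgroup_aut {G : Type*} [Group G] [Finite G] {p q : ℕ}
    (hp : p.Prime) (hq : q.Prime) (hpq : p ≠ q) :
    (∃ H : Subgroup G, IsSchmidtPQ p q H) ↔
      ∃ P : Subgroup G, IsPGroup p P ∧
        q ∣ (Subgroup.centralizer (P : Set G)).relIndex (Subgroup.normalizer (P : Set G)) := by
  constructor
  · rintro ⟨H, hH⟩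
    exact aux_forward hp hq hpq H hH
  · rintro ⟨P, hP, hdvd⟩
    exact aux_reverse hp hq hpq P hP hdvd
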